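/- (Lemma 3) Let C > 0 and let (uᵏ)ₖ≥0 be a sequence of nonnegative real numbers satisfying uᵏ⁺¹ ≤ −2C + 2C·√(1 + uᵏ/C) for all k ≥ 0. Then for every k ≥ 1, uᵏ ≤ C₂/k, where C₂ = max(8C, 2√(C·u⁰)). -/

import Mathlib

open scoped RealInnerProductSpace
open Matrix Filter

noncomputable section

/-- Euclidean space ℝⁿ. -/
abbrev E (n : ℕ) := EuclideanSpace ℝ (Fin n)

/-- Matrix-vector multiplication, valued in Euclidean space. -/
def mulVecE {n : ℕ} (M : Matrix (Fin n) (Fin n) ℝ) (x : E n) : E n :=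
  (WithLp.equiv 2 (Fin n → ℝ)).symm (M.mulVec ((WithLp.equiv 2 (Fin n → ℝ)) x))

/-- Operator (spectral) norm of a matrix. -/
def opNorm {n : ℕ} (M : Matrix (Fin n) (Fin n) ℝ) : ℝ :=
  ‖Matrix.toEuclideanCLM (𝕜 := ℝ) M‖

/-- The diagonal part `D` of `A`. -/
def Dmat {n : ℕ} (A : Matrix (Fin n) (Fin n) ℝ) : Matrix (Fin n) (Fin n) ℝ :=
  Matrix.diagonal fun i => A i i

/-- The strictly lower triangular part `L` of `A`. -/
def Lmat {n : ℕ} (A : Matrix (Fin n) (Fin n) ℝ) : Matrix (Fin n) (Fin n) ℝ :=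
  Matrix.of fun i j => if (j : ℕ) < (i : ℕ) then A i j else 0

/-- `B = L + (1/ω)(D + θI)`. -/
def Bmat {n : ℕ} (ω θ : ℝ) (A : Matrix (Fin n) (Fin n) ℝ) : Matrix (Fin n) (Fin n) ℝ :=
  Lmat A + ω⁻¹ • (Dmat A + θ • (1 : Matrix (Fin n) (Fin n) ℝ))

/-- `C = Lᵀ + (1/ω)((ω−1)D − θI)`. -/
def Cmat {n : ℕ} (ω θ : ℝ) (A : Matrix (Fin n) (Fin n) ℝ) : Matrix (Fin n) (Fin n) ℝ :=
  (Lmat A)ᵀ + ω⁻¹ • ((ω - 1) • Dmat A - θ • (1 : Matrix (Fin n) (Fin n) ℝ))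

/-- `v` is a subgradient of `h` at `z`. -/
def IsSubgradient {n : ℕ} (h : E n → ℝ) (v z : E n) : Prop :=
  ∀ y, h z + ⟪v, y - z⟫ ≤ h y

/-- The composite objective `f(x) = (1/2)⟨x, Ax⟩ + ⟨b, x⟩ + h(x)`. -/
def fObj {n : ℕ} (A : Matrix (Fin n) (Fin n) ℝ) (b : E n) (h : E n → ℝ) (x : E n) : ℝ :=
  (1/2) * ⟪x, mulVecE A x⟫ + ⟪b, x⟫ + h x

/-- `z` is a triangle-proximal point of `x`: there is a subgradient `v` of `h` at `z`
with `Bz + b + Cx + v = 0`. -/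
def IsTriangleProx {n : ℕ} (ω θ : ℝ) (A : Matrix (Fin n) (Fin n) ℝ) (b : E n)
    (h : E n → ℝ) (x z : E n) : Prop :=
  ∃ v, IsSubgradient h v z ∧
    mulVecE (Bmat ω θ A) z + b + mulVecE (Cmat ω θ A) x + v = 0
/-- Lemma 3. -/
theorem recursive_sequence_sublinear_bound (C : ℝ) (hC : 0 < C)
    (u : ℕ → ℝ) (hu : ∀ k, 0 ≤ u k)
    (hrec : ∀ k : ℕ, u (k + 1) ≤ -2 * C + 2 * C * Real.sqrt (1 + u k / C)) :
    ∀ k : ℕ, 1 ≤ k → u k ≤ max (8 * C) (2 * Real.sqrt (C * u 0)) / k := by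

  intro k hk
  set M := max (8 * C) (2 * Real.sqrt (C * u 0)) with hMdef
  have hM8 : 8 * C ≤ M := le_max_left _ _
  have hMpos : 0 < M := lt_of_lt_of_le (by linarith) hM8
  -- key inequality: u(k+1)^2 + 4C u(k+1) ≤ 4C u k
  have key : ∀ k : ℕ, u (k+1)^2 + 4*C*u (k+1) ≤ 4*C*u k := by
    intro n
    have h1 := hrec n
    have hx : (0:ℝ) ≤ 1 + u n / C := by
      have := div_nonneg (hu n) hC.le; linarith
    have hs : Real.sqrt (1 + u n / C) ^ 2 = 1 + u n / C := Real.sq_sqrt hx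
    have h2 : u (n+1) + 2*C ≤ 2*C*Real.sqrt (1 + u n / C) := by linarith
    have h3 : (u (n+1) + 2*C)^2 ≤ (2*C*Real.sqrt (1 + u n / C))^2 := by
      have hnn : (0:ℝ) ≤ u (n+1) + 2*C := by have := hu (n+1); linarith
      exact pow_le_pow_left₀ hnn h2 2
    have h4 : (2*C*Real.sqrt (1 + u n / C))^2 = 4*C^2*(1 + u n / C) := by
      rw [mul_pow, mul_pow, hs]; ring
    rw [h4] at h3
    have h5 : 4*C^2*(1 + u n / C) = 4*C^2 + 4*C*u n := by field_simp
    nlinarith [h3]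
  -- base case bound : u 1 ≤ 2 √(C u 0)
  have base : u 1 ≤ 2 * Real.sqrt (C * u 0) := by
    have h1 := hrec 0
    have hx : (0:ℝ) ≤ u 0 / C := div_nonneg (hu 0) hC.le
    have hsq : Real.sqrt (1 + u 0 / C) ≤ 1 + Real.sqrt (u 0 / C) := by
      rw [show (1:ℝ) + Real.sqrt (u 0 / C)
          = Real.sqrt ((1 + Real.sqrt (u 0 / C))^2) from
        (Real.sqrt_sq (by positivity)).symm]
      apply Real.sqrt_le_sqrt
      nlinarith [Real.sqrt_nonneg (u 0 / C), Real.sq_sqrt hx]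
    have heq : C * Real.sqrt (u 0 / C) = Real.sqrt (C * u 0) := by
      rw [Real.sqrt_div (hu 0) C, Real.sqrt_mul hC.le]
      have hCs : Real.sqrt C ≠ 0 := ne_of_gt (Real.sqrt_pos.mpr hC)
      have hC2 : Real.sqrt C * Real.sqrt C = C := Real.mul_self_sqrt hC.le
      field_simp
      linear_combination (-Real.sqrt (u 0)) * hC2
    nlinarith [h1, hsq]
  induction k, hk using Nat.le_induction with
  | base =>
    rw [Nat.cast_one, div_one]
    exact le_trans base (le_max_right _ _)
  | succ n hn ih =>
    have hkey := key n
    have hN1 : (1:ℝ) ≤ (n:ℝ) := by exact_mod_cast hn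
    have hNpos : (0:ℝ) < (n:ℝ) := by linarith
    have hN1pos : (0:ℝ) < (n:ℝ) + 1 := by linarith
    have hstep : 4*C*u n ≤ 4*C*(M/(n:ℝ)) := by
      have := ih
      nlinarith
    -- show u(n+1) ≤ M/(n+1)
    by_contra hcon
    push_neg at hcon
    rw [Nat.cast_add, Nat.cast_one] at hcon
    have hb : (0:ℝ) < M / ((n:ℝ)+1) := by positivity
    have ha : M / ((n:ℝ)+1) < u (n+1) := hcon
    have h6 : (M/((n:ℝ)+1))^2 + 4*C*(M/((n:ℝ)+1)) < 4*C*(M/(n:ℝ)) := by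
      nlinarith [sq_nonneg (u (n+1)), hu (n+1)]
    have h7 : M^2*(n:ℝ) + 4*C*M*(n:ℝ)*((n:ℝ)+1) < 4*C*M*((n:ℝ)+1)^2 := by
      have hmul := mul_lt_mul_of_pos_left h6 (show (0:ℝ) < (n:ℝ)*((n:ℝ)+1)^2 by positivity)
      have e1 : (n:ℝ)*((n:ℝ)+1)^2 * ((M/((n:ℝ)+1))^2 + 4*C*(M/((n:ℝ)+1)))
          = M^2*(n:ℝ) + 4*C*M*(n:ℝ)*((n:ℝ)+1) := by
        field_simp
      have e2 : (n:ℝ)*((n:ℝ)+1)^2 * (4*C*(M/(n:ℝ)))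
          = 4*C*M*((n:ℝ)+1)^2 := by
        field_simp
      rw [e1, e2] at hmul
      exact hmul
    have h8' : M * (M * (n:ℝ)) < M * (4*C*((n:ℝ)+1)) := by nlinarith [h7]
    have h8 : M * (n:ℝ) < 4*C*((n:ℝ)+1) := lt_of_mul_lt_mul_left h8' hMpos.le
    nlinarith [mul_le_mul_of_nonneg_right hM8 hNpos.le, hC, hN1]
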